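/- arXiv:1609.00952 — 7 statements merged into one kernel-verified Lean document; each statement's English description precedes it below -/
import Mathlib

section
/- Let d1 ≤ d2 ≤ d3 be positive integers and let (h_i) be the Hilbert function of a complete intersection of type (d1,d2,d3) in k[x,y,z], i.e., h_i = dim_k [k[x,y,z]/(f1,f2,f3)]_i for a regular sequence of forms of degrees d1,d2,d3 (equivalently h_i is determined by the generating function ∏_{j=1}^{3}(1+t+...+t^{d_j-1})). If the socle degree e = d1+d2+d3-3 is odd and d3 < d1+d2, then h_{(e-1)/2} = h_{(e+1)/2} = d1·d2 - (d1+d2-d3)^2/4. -/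
section CIAux

private lemma ci_gauss (N : ℕ) : 2 * ∑ a ∈ Finset.range N, ((N:ℤ) - a) = N * (N+1) := by
  induction N with
  | zero => simp
  | succ N ih =>
    rw [Finset.sum_range_succ]
    have h : ∑ a ∈ Finset.range N, (((N+1:ℕ):ℤ) - a) = ∑ a ∈ Finset.range N, (((N:ℤ) - a) + 1) :=
      Finset.sum_congr rfl (fun _ _ => by push_cast; ring)
    rw [h, Finset.sum_add_distrib, Finset.sum_const, Finset.card_range, nsmul_eq_mul]
    push_cast
    push_cast at ih
    linarith

private lemma ci_row (d : ℕ) (X : ℤ) (hX : X < d) :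
    ∑ b ∈ Finset.range d, (if (b:ℤ) ≤ X then (1:ℤ) else 0) = max (X+1) 0 := by
  rw [Finset.sum_boole]
  have h : (Finset.range d).filter (fun b : ℕ => (b:ℤ) ≤ X) = Finset.range ((X+1).toNat) := by
    ext b; simp only [Finset.mem_filter, Finset.mem_range]; omega
  rw [h, Finset.card_range]
  omega

private lemma ci_tri (d1 d2 : ℕ) (K : ℤ) (h0 : -1 ≤ K) (h1 : K < d1) (h2 : K < d2) :
    2 * ∑ a ∈ Finset.range d1, ∑ b ∈ Finset.range d2,
      (if (a:ℤ) + (b:ℤ) ≤ K then (1:ℤ) else 0) = (K+1)*(K+2) := by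
  have hrow : ∀ a ∈ Finset.range d1, ∑ b ∈ Finset.range d2,
      (if (a:ℤ) + (b:ℤ) ≤ K then (1:ℤ) else 0) = max (K - a + 1) 0 := by
    intro a _
    rw [← ci_row d2 (K - a) (by omega)]
    refine Finset.sum_congr rfl (fun b _ => ?_)
    by_cases hc : (a:ℤ) + b ≤ K
    · rw [if_pos hc, if_pos (by omega)]
    · rw [if_neg hc, if_neg (by omega)]
  rw [Finset.sum_congr rfl hrow]
  set N := (K+1).toNat with hN
  have hNd : N ≤ d1 := by omega
  have hsub : ∑ a ∈ Finset.range d1, max (K - (a:ℤ) + 1) 0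
      = ∑ a ∈ Finset.range N, ((N:ℤ) - a) := by
    rw [← Finset.sum_subset (Finset.range_subset_range.2 hNd)]
    · exact Finset.sum_congr rfl (fun a ha => by
        simp only [Finset.mem_range] at ha
        rw [max_eq_left (by omega)]; omega)
    · intro x _ hx
      simp only [Finset.mem_range] at hx
      rw [max_eq_right (by omega)]
  rw [hsub, ci_gauss]
  have h : (N:ℤ) = K + 1 := by omega
  rw [h]; ring

private lemma ci_coeff_eq (d1 d2 d3 n : ℕ) :
    ((List.map (fun d => ∑ j ∈ Finset.range d, (Polynomial.X : Polynomial ℤ) ^ j)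
      [d1, d2, d3]).prod).coeff n
    = ∑ a ∈ Finset.range d1, ∑ b ∈ Finset.range d2, ∑ c ∈ Finset.range d3,
        (if n = a + b + c then (1:ℤ) else 0) := by
  simp only [List.map_cons, List.map_nil, List.prod_cons, List.prod_nil, mul_one]
  simp only [Finset.sum_mul, Finset.mul_sum, ← pow_add, Polynomial.finset_sum_coeff,
    Polynomial.coeff_X_pow]
  rw [Finset.sum_comm]
  refine Eq.trans (Finset.sum_congr rfl fun b _ => Finset.sum_comm) ?_
  rw [Finset.sum_comm]
  refine Finset.sum_congr rfl fun a _ => Finset.sum_congr rfl fun b _ =>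
    Finset.sum_congr rfl fun c _ => ?_
  congr 1
  simp only [eq_iff_iff]
  omega

private lemma ci_csum (d3 a b n : ℕ) :
    ∑ c ∈ Finset.range d3, (if n = a + b + c then (1:ℤ) else 0)
    = (if a + b ≤ n then (1:ℤ) else 0) - (if a + b + d3 ≤ n then (1:ℤ) else 0) := by
  rw [Finset.sum_boole]
  have h : (Finset.range d3).filter (fun c => n = a + b + c)
      = if a + b ≤ n ∧ n < a + b + d3 then {n - (a + b)} else ∅ := by
    split_ifs with hc
    · ext c
      simp only [Finset.mem_filter, Finset.mem_range, Finset.mem_singleton]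
      omega
    · ext c
      simp only [Finset.mem_filter, Finset.mem_range, Finset.notMem_empty, iff_false, not_and]
      omega
  rw [h]
  split_ifs <;> simp <;> omega

private lemma ci_refl2 (d : ℕ) (g : ℕ → ℤ) :
    ∑ j ∈ Finset.range d, g j = ∑ j ∈ Finset.range d, g (d - 1 - j) :=
  (Finset.sum_range_reflect g d).symm

private lemma ci_key (d1 d2 d3 n : ℕ) :
    ((List.map (fun d => ∑ j ∈ Finset.range d, (Polynomial.X : Polynomial ℤ) ^ j)
      [d1, d2, d3]).prod).coeff n
    = d1 * d2
      - (∑ a ∈ Finset.range d1, ∑ b ∈ Finset.range d2,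
          (if (a:ℤ) + b ≤ (d1:ℤ) + d2 - 3 - n then (1:ℤ) else 0))
      - (∑ a ∈ Finset.range d1, ∑ b ∈ Finset.range d2,
          (if (a:ℤ) + b ≤ (n:ℤ) - d3 then (1:ℤ) else 0)) := by
  rw [ci_coeff_eq]
  have step0 : ∑ a ∈ Finset.range d1, ∑ b ∈ Finset.range d2, ∑ c ∈ Finset.range d3,
        (if n = a + b + c then (1:ℤ) else 0)
      = (∑ a ∈ Finset.range d1, ∑ b ∈ Finset.range d2, (if a + b ≤ n then (1:ℤ) else 0))
        - (∑ a ∈ Finset.range d1, ∑ b ∈ Finset.range d2,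
            (if a + b + d3 ≤ n then (1:ℤ) else 0)) := by
    rw [← Finset.sum_sub_distrib]
    refine Finset.sum_congr rfl fun a _ => ?_
    rw [← Finset.sum_sub_distrib]
    exact Finset.sum_congr rfl fun b _ => ci_csum d3 a b n
  rw [step0]
  have step1 : ∑ a ∈ Finset.range d1, ∑ b ∈ Finset.range d2,
        (if a + b ≤ n then (1:ℤ) else 0)
      = d1 * d2 - ∑ a ∈ Finset.range d1, ∑ b ∈ Finset.range d2,
          (if n + 1 ≤ a + b then (1:ℤ) else 0) := by
    have hpt : ∀ a b : ℕ, (if a + b ≤ n then (1:ℤ) else 0)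
        = 1 - (if n + 1 ≤ a + b then (1:ℤ) else 0) := by
      intro a b; split_ifs <;> omega
    simp only [hpt, Finset.sum_sub_distrib, Finset.sum_const, Finset.card_range,
      nsmul_eq_mul, mul_one]
    try push_cast
    try ring
  have step2 : ∑ a ∈ Finset.range d1, ∑ b ∈ Finset.range d2,
        (if n + 1 ≤ a + b then (1:ℤ) else 0)
      = ∑ a ∈ Finset.range d1, ∑ b ∈ Finset.range d2,
          (if (a:ℤ) + b ≤ (d1:ℤ) + d2 - 3 - n then (1:ℤ) else 0) := by
    refine Eq.trans (ci_refl2 d1 (fun a => ∑ b ∈ Finset.range d2,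
      (if n + 1 ≤ a + b then (1:ℤ) else 0))) ?_
    refine Finset.sum_congr rfl fun a ha => ?_
    refine Eq.trans (ci_refl2 d2 (fun b => (if n + 1 ≤ (d1 - 1 - a) + b then (1:ℤ) else 0))) ?_
    refine Finset.sum_congr rfl fun b hb => ?_
    simp only [Finset.mem_range] at ha hb
    by_cases hc : n + 1 ≤ (d1 - 1 - a) + (d2 - 1 - b)
    · rw [if_pos hc, if_pos (by omega)]
    · rw [if_neg hc, if_neg (by omega)]
  have step3 : ∑ a ∈ Finset.range d1, ∑ b ∈ Finset.range d2,
        (if a + b + d3 ≤ n then (1:ℤ) else 0)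
      = ∑ a ∈ Finset.range d1, ∑ b ∈ Finset.range d2,
          (if (a:ℤ) + b ≤ (n:ℤ) - d3 then (1:ℤ) else 0) := by
    refine Finset.sum_congr rfl fun a _ => Finset.sum_congr rfl fun b _ => ?_
    by_cases hc : a + b + d3 ≤ n
    · rw [if_pos hc, if_pos (by omega)]
    · rw [if_neg hc, if_neg (by omega)]
  rw [step1, step2, step3]

end CIAux

/-- The Hilbert function of an artinian complete intersection whose generator
degrees are given by the list `ds`: the coefficients of
`∏_j (1 + t + ⋯ + t^(d_j - 1))`, extended by `0` to negative indices. -/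
noncomputable def hilbCI (ds : List ℕ) (i : ℤ) : ℤ :=
  if i < 0 then 0
  else ((ds.map fun d => ∑ j ∈ Finset.range d, (Polynomial.X : Polynomial ℤ) ^ j)).prod.coeff
    i.toNat

theorem ci_codim3_odd_middle (d1 d2 d3 : ℕ) (hd1 : 0 < d1) (h12 : d1 ≤ d2) (h23 : d2 ≤ d3)
    (e : ℤ) (he : e = d1 + d2 + d3 - 3) (hodd : Odd e) (hlt : (d3 : ℤ) < d1 + d2) :
    hilbCI [d1, d2, d3] ((e - 1) / 2) = hilbCI [d1, d2, d3] ((e + 1) / 2) ∧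
    4 * hilbCI [d1, d2, d3] ((e - 1) / 2) =
      4 * d1 * d2 - ((d1 : ℤ) + d2 - d3) ^ 2 := by
  obtain ⟨k, hk⟩ := hodd
  obtain ⟨t, ht⟩ : ∃ t : ℕ, d1 + d2 = d3 + 2 * t := ⟨(d1 + d2 - d3) / 2, by omega⟩
  have ht1 : 1 ≤ t := by omega
  set m : ℕ := t + d3 - 2 with hm
  have hme : (e - 1) / 2 = (m : ℤ) := by omega
  have hme' : (e + 1) / 2 = ((m + 1 : ℕ) : ℤ) := by push_cast; omega
  have hv1 : hilbCI [d1, d2, d3] ((e - 1) / 2)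
      = ((List.map (fun d => ∑ j ∈ Finset.range d, (Polynomial.X : Polynomial ℤ) ^ j)
          [d1, d2, d3]).prod).coeff m := by
    rw [hilbCI, hme]
    rw [if_neg (by omega)]
    simp
  have hv2 : hilbCI [d1, d2, d3] ((e + 1) / 2)
      = ((List.map (fun d => ∑ j ∈ Finset.range d, (Polynomial.X : Polynomial ℤ) ^ j)
          [d1, d2, d3]).prod).coeff (m + 1) := by
    rw [hilbCI, hme']
    rw [if_neg (by omega)]
    simp
  have hK1 : (d1:ℤ) + d2 - 3 - m = (t:ℤ) - 1 := by omega
  have hK2 : (m:ℤ) - d3 = (t:ℤ) - 2 := by omega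
  have hK1' : (d1:ℤ) + d2 - 3 - (m + 1 : ℕ) = (t:ℤ) - 2 := by push_cast; omega
  have hK2' : ((m + 1 : ℕ):ℤ) - d3 = (t:ℤ) - 1 := by push_cast; omega
  have htd1 : (t:ℤ) - 1 < d1 := by omega
  have htd2 : (t:ℤ) - 1 < d2 := by omega
  have tri1 := ci_tri d1 d2 ((t:ℤ) - 1) (by omega) htd1 htd2
  have tri2 := ci_tri d1 d2 ((t:ℤ) - 2) (by omega) (by omega) (by omega)
  rw [hv1, hv2, ci_key, ci_key, hK1, hK2, hK1', hK2']
  constructor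
  · ring
  · have h2t : (d1:ℤ) + d2 - d3 = 2 * t := by omega
    rw [h2t]
    linarith [tri1, tri2]
end

section
/- Let d1 ≤ d2 ≤ d3 be positive integers, let e = d1+d2+d3-3 be even, and let (h_i) be the Hilbert function of an artinian complete intersection of type (d1,d2,d3) in three variables. Then h_{e/2} - h_{e/2 - 1} = 0 if d3 ≥ d1+d2+1, and h_{e/2} - h_{e/2 - 1} = 1 if d3 ≤ d1+d2-1. -/
open Polynomial Finset

noncomputable def geomP (d : ℕ) : Polynomial ℤ := ∑ j ∈ Finset.range d, X ^ j

lemma coeff_geomP (d n : ℕ) : (geomP d).coeff n = if n < d then 1 else 0 := by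
  simp [geomP, finset_sum_coeff, coeff_X_pow]

lemma coeff_geom_mul (d1 d2 k : ℕ) :
    (geomP d1 * geomP d2).coeff k
      = (((range (k+1)).filter (fun i => i < d1 ∧ k - i < d2)).card : ℤ) := by
  rw [coeff_mul, Finset.Nat.sum_antidiagonal_eq_sum_range_succ_mk, ← Finset.sum_boole]
  apply Finset.sum_congr rfl
  intro i _
  simp only [coeff_geomP]
  by_cases h1 : i < d1 <;> by_cases h2 : k - i < d2 <;> simp [h1, h2]

lemma q_low (d1 d2 j : ℕ) (h1 : j < d1) (h2 : j < d2) :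
    (geomP d1 * geomP d2).coeff j = (j : ℤ) + 1 := by
  rw [coeff_geom_mul]
  have hs : (range (j+1)).filter (fun i => i < d1 ∧ j - i < d2) = range (j+1) := by
    apply Finset.filter_true_of_mem
    intro i hi
    simp only [Finset.mem_range] at hi
    omega
  rw [hs, card_range]
  push_cast; ring

lemma q_high (d1 d2 m : ℕ) (h1 : d1 ≤ m + 1) (h2 : d2 ≤ m + 1) (h3 : m ≤ d1 + d2 - 2)
    (hd1 : 1 ≤ d1) (hd2 : 1 ≤ d2) :
    (geomP d1 * geomP d2).coeff m = (d1 : ℤ) + d2 - 1 - m := by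
  rw [coeff_geom_mul]
  have hs : (range (m+1)).filter (fun i => i < d1 ∧ m - i < d2)
      = Finset.Icc (m + 1 - d2) (d1 - 1) := by
    ext i
    simp only [Finset.mem_filter, Finset.mem_Icc, Finset.mem_range]
    omega
  rw [hs, Nat.card_Icc]
  omega

lemma q_zero (d1 d2 k : ℕ) (h : d1 + d2 - 1 ≤ k) (hd1 : 1 ≤ d1) (hd2 : 1 ≤ d2) :
    (geomP d1 * geomP d2).coeff k = 0 := by
  rw [coeff_geom_mul]
  have hs : (range (k+1)).filter (fun i => i < d1 ∧ k - i < d2) = ∅ := by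
    ext i
    simp only [Finset.mem_filter, Finset.mem_range, Finset.notMem_empty, iff_false]
    omega
  simp [hs]

lemma diff_eq (d1 d2 d3 N : ℕ) :
    (geomP d1 * geomP d2 * geomP d3).coeff (N+1) - (geomP d1 * geomP d2 * geomP d3).coeff N
      = (geomP d1 * geomP d2).coeff (N+1)
        - (if d3 ≤ N+1 then (geomP d1 * geomP d2).coeff (N+1 - d3) else 0) := by
  have h1 : (geomP d1 * geomP d2 * geomP d3) * (X - 1)
      = (geomP d1 * geomP d2) * X ^ d3 - (geomP d1 * geomP d2) := by
    have : geomP d3 * (X - 1) = X ^ d3 - 1 := geom_sum_mul X d3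
    rw [mul_assoc, this]
    ring
  have h2 := congrArg (fun p => Polynomial.coeff p (N+1)) h1
  simp only [mul_sub, mul_one, coeff_sub, coeff_mul_X, coeff_mul_X_pow'] at h2
  split at h2 <;> [rw [if_pos ‹_›]; rw [if_neg ‹_›]] <;> linarith

theorem ci_codim3_even_middle_difference (d1 d2 d3 : ℕ) (hd1 : 0 < d1) (h12 : d1 ≤ d2)
    (h23 : d2 ≤ d3) (e : ℤ) (he : e = d1 + d2 + d3 - 3) (heven : Even e) :
    ((d1 : ℤ) + d2 + 1 ≤ d3 →
      hilbCI [d1, d2, d3] (e / 2) - hilbCI [d1, d2, d3] (e / 2 - 1) = 0) ∧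
    ((d3 : ℤ) ≤ d1 + d2 - 1 →
      hilbCI [d1, d2, d3] (e / 2) - hilbCI [d1, d2, d3] (e / 2 - 1) = 1) := by
  have key : ∀ n : ℕ, hilbCI [d1, d2, d3] (n : ℤ)
      = (geomP d1 * geomP d2 * geomP d3).coeff n := by
    intro n
    rw [hilbCI, if_neg (by omega)]
    simp [geomP, mul_assoc]
  obtain ⟨r, hr⟩ := heven
  have hr0 : (0:ℤ) ≤ r := by omega
  have he2 : e / 2 = r := by omega
  set M : ℕ := r.toNat with hMdef
  have hMr : (M : ℤ) = r := Int.toNat_of_nonneg hr0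
  have hsum : 2 * M + 3 = d1 + d2 + d3 := by omega
  have hv1 : hilbCI [d1, d2, d3] (e / 2) = (geomP d1 * geomP d2 * geomP d3).coeff M := by
    rw [he2, ← hMr, key]
  constructor
  · intro h
    have hM2 : 1 ≤ M := by omega
    have hv2 : hilbCI [d1, d2, d3] (e / 2 - 1)
        = (geomP d1 * geomP d2 * geomP d3).coeff (M - 1) := by
      have : e / 2 - 1 = ((M - 1 : ℕ) : ℤ) := by omega
      rw [this, key]
    rw [hv1, hv2]
    have hd := diff_eq d1 d2 d3 (M - 1)
    have hN : M - 1 + 1 = M := by omega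
    rw [hN] at hd
    rw [hd, q_zero d1 d2 M (by omega) (by omega) (by omega), if_neg (by omega)]
    ring
  · intro h
    by_cases hM0 : M = 0
    · have hd : d1 = 1 ∧ d2 = 1 ∧ d3 = 1 := by omega
      obtain ⟨e1, e2, e3⟩ := hd
      subst e1; subst e2; subst e3
      have h0 : e / 2 = 0 := by omega
      rw [h0]
      norm_num [hilbCI]
    · have hv2 : hilbCI [d1, d2, d3] (e / 2 - 1)
          = (geomP d1 * geomP d2 * geomP d3).coeff (M - 1) := by
        have : e / 2 - 1 = ((M - 1 : ℕ) : ℤ) := by omega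
        rw [this, key]
      rw [hv1, hv2]
      have hd := diff_eq d1 d2 d3 (M - 1)
      have hN : M - 1 + 1 = M := by omega
      rw [hN] at hd
      rw [hd, q_high d1 d2 M (by omega) (by omega) (by omega) (by omega) (by omega)]
      by_cases hd3M : d3 ≤ M
      · rw [if_pos hd3M, q_low d1 d2 (M - d3) (by omega) (by omega)]
        omega
      · rw [if_neg hd3M]
        omega
end

section
/- Let d1 ≤ d2 ≤ d3 ≤ d4 be positive integers with socle degree e = d1+d2+d3+d4-4 even, and let (h_i) be the Hilbert function of an artinian complete intersection of type (d1,d2,d3,d4) in four variables. Then h_{e/2} - h_{e/2-1} equals 0 if d4 ≥ d1+d2+d3; equals (d1+d2+d3-d4)/2 if -d1+d2+d3 ≤ d4 ≤ d1+d2+d3; and equals d1 if d4 ≤ -d1+d2+d3. -/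
open Polynomial Finset

noncomputable def gp (d : ℕ) : Polynomial ℤ := ∑ j ∈ Finset.range d, (Polynomial.X : Polynomial ℤ) ^ j

noncomputable def cz (P : Polynomial ℤ) (i : ℤ) : ℤ := if i < 0 then 0 else P.coeff i.toNat

lemma coeff_gp (d k : ℕ) : (gp d).coeff k = if k < d then 1 else 0 := by
  rw [gp, Polynomial.finset_sum_coeff]
  simp only [Polynomial.coeff_X_pow]
  rw [Finset.sum_ite_eq (Finset.range d) k (fun _ => (1:ℤ))]
  simp [Finset.mem_range]

lemma gp_monic (d : ℕ) (hd : 0 < d) : (gp d).Monic :=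
  Polynomial.monic_geom_sum_X (by omega)

lemma gp_natDegree (d : ℕ) (hd : 0 < d) : (gp d).natDegree = d - 1 := by
  apply le_antisymm
  · rw [Polynomial.natDegree_le_iff_coeff_eq_zero]
    intro m hm
    rw [coeff_gp, if_neg (by omega)]
  · apply Polynomial.le_natDegree_of_ne_zero
    rw [coeff_gp, if_pos (by omega)]
    exact one_ne_zero

lemma gp_reverse (d : ℕ) : (gp d).reverse = gp d := by
  rcases Nat.eq_zero_or_pos d with h | h
  · subst h; simp [gp]
  · ext k
    rw [Polynomial.coeff_reverse, gp_natDegree d h]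
    rcases le_or_gt k (d - 1) with hk | hk
    · rw [Polynomial.revAt_le hk, coeff_gp, coeff_gp, if_pos (by omega), if_pos (by omega)]
    · rw [Polynomial.revAt_eq_self_of_lt hk]

lemma cz_sub (P Q : Polynomial ℤ) (i : ℤ) : cz (P - Q) i = cz P i - cz Q i := by
  unfold cz; split_ifs <;> simp

lemma cz_mul_X (P : Polynomial ℤ) (n : ℤ) : cz (P * Polynomial.X) n = cz P (n - 1) := by
  unfold cz
  rcases lt_trichotomy n 0 with h | h | h
  · rw [if_pos h, if_pos (by omega)]
  · subst h
    rw [if_neg (by omega), if_pos (by omega)]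
    simp [Polynomial.mul_coeff_zero]
  · rw [if_neg (by omega), if_neg (by omega)]
    have : n.toNat = (n-1).toNat + 1 := by omega
    rw [this, Polynomial.coeff_mul_X]

lemma cz_mul_X_pow (P : Polynomial ℤ) (d : ℕ) (n : ℤ) :
    cz (P * Polynomial.X ^ d) n = cz P (n - d) := by
  unfold cz
  rcases lt_or_ge n 0 with h | h
  · rw [if_pos h, if_pos (by omega)]
  · rw [if_neg (by omega), Polynomial.coeff_mul_X_pow']
    rcases lt_or_ge n (d : ℤ) with h2 | h2
    · rw [if_neg (by omega), if_pos (by omega)]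
    · rw [if_pos (by omega), if_neg (by omega)]
      congr 1
      omega

lemma cz_diff (P : Polynomial ℤ) (d : ℕ) (n : ℤ) :
    cz (P * gp d) n - cz (P * gp d) (n - 1) = cz P n - cz P (n - d) := by
  have hQ : (P * gp d) * Polynomial.X - (P * gp d) = P * Polynomial.X ^ d - P := by
    have h := geom_sum_mul (Polynomial.X : Polynomial ℤ) d
    calc (P * gp d) * Polynomial.X - (P * gp d)
        = P * ((∑ i ∈ Finset.range d, (Polynomial.X : Polynomial ℤ) ^ i) * (Polynomial.X - 1)) := by
          rw [gp]; ring
      _ = P * (Polynomial.X ^ d - 1) := by rw [h]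
      _ = P * Polynomial.X ^ d - P := by ring
  have := congrArg (fun Q => cz Q n) hQ
  simp only [cz_sub, cz_mul_X, cz_mul_X_pow] at this
  linarith

lemma coeff_gg (a b n : ℕ) :
    (gp a * gp b).coeff n = ((min a (n+1) - (n+1-b) : ℕ) : ℤ) := by
  rw [Polynomial.coeff_mul]
  have hterm : ∀ x : ℕ × ℕ, (gp a).coeff x.1 * (gp b).coeff x.2
      = if x.1 < a ∧ x.2 < b then (1:ℤ) else 0 := by
    intro x
    rw [coeff_gp, coeff_gp]
    split_ifs with h1 h2 h3 <;> simp_all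
  simp only [hterm]
  rw [Finset.sum_boole]
  congr 1
  rw [Nat.antidiagonal_eq_map, Finset.filter_map, Finset.card_map]
  have : Finset.filter ((fun x : ℕ × ℕ => x.1 < a ∧ x.2 < b) ∘
      (fun i => (i, n - i))) (Finset.range (n+1)) = Finset.Ico (n+1-b) (min a (n+1)) := by
    ext x
    simp only [Finset.mem_filter, Finset.mem_range, Function.comp, Finset.mem_Ico]
    omega
  change (Finset.filter ((fun x : ℕ × ℕ => x.1 < a ∧ x.2 < b) ∘
      (fun i => (i, n - i))) (Finset.range (n+1))).card = _
  rw [this, Nat.card_Ico]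

lemma cz_sym (a b c : ℕ) (ha : 0 < a) (hb : 0 < b) (hc : 0 < c) (i : ℤ) :
    cz (gp a * gp b * gp c) i = cz (gp a * gp b * gp c) ((a:ℤ) + b + c - 3 - i) := by
  set P := gp a * gp b * gp c with hP
  have hma := gp_monic a ha
  have hmb := gp_monic b hb
  have hmc := gp_monic c hc
  have hdeg : P.natDegree = (a - 1) + (b - 1) + (c - 1) := by
    rw [hP, Polynomial.Monic.natDegree_mul (hma.mul hmb) hmc,
      Polynomial.Monic.natDegree_mul hma hmb, gp_natDegree a ha, gp_natDegree b hb,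
      gp_natDegree c hc]
  set D : ℕ := (a - 1) + (b - 1) + (c - 1) with hD
  have hDz : (D : ℤ) = (a:ℤ) + b + c - 3 := by omega
  have hrev : P.reverse = P := by
    rw [hP, Polynomial.reverse_mul_of_domain, Polynomial.reverse_mul_of_domain,
      gp_reverse, gp_reverse, gp_reverse]
  have hsym : ∀ k : ℕ, k ≤ D → P.coeff k = P.coeff (D - k) := by
    intro k hk
    conv_lhs => rw [← hrev]
    rw [Polynomial.coeff_reverse, hdeg, Polynomial.revAt_le hk]
  have hvan : ∀ k : ℕ, D < k → P.coeff k = 0 := by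
    intro k hk
    exact Polynomial.coeff_eq_zero_of_natDegree_lt (by omega)
  unfold cz
  rcases lt_or_ge i 0 with h | h
  · rw [if_pos h, if_neg (by omega), hvan _ (by omega)]
  · rcases le_or_gt i (D : ℤ) with h2 | h2
    · rw [if_neg (by omega), if_neg (by omega)]
      have h3 : ((a:ℤ) + b + c - 3 - i).toNat = D - i.toNat := by omega
      rw [h3, hsym i.toNat (by omega)]
    · rw [if_neg (by omega), if_pos (by omega), hvan _ (by omega)]

theorem ci_codim4_even_middle_difference (d1 d2 d3 d4 : ℕ) (hd1 : 0 < d1) (h12 : d1 ≤ d2)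
    (h23 : d2 ≤ d3) (h34 : d3 ≤ d4) (e : ℤ) (he : e = d1 + d2 + d3 + d4 - 4) (heven : Even e) :
    ((d1 : ℤ) + d2 + d3 ≤ d4 →
      hilbCI [d1, d2, d3, d4] (e / 2) - hilbCI [d1, d2, d3, d4] (e / 2 - 1) = 0) ∧
    (-(d1 : ℤ) + d2 + d3 ≤ d4 → (d4 : ℤ) ≤ d1 + d2 + d3 →
      2 * (hilbCI [d1, d2, d3, d4] (e / 2) - hilbCI [d1, d2, d3, d4] (e / 2 - 1)) =
        (d1 : ℤ) + d2 + d3 - d4) ∧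
    ((d4 : ℤ) ≤ -(d1 : ℤ) + d2 + d3 →
      hilbCI [d1, d2, d3, d4] (e / 2) - hilbCI [d1, d2, d3, d4] (e / 2 - 1) = d1) := by
  have hd2 : 0 < d2 := by omega
  have hd3 : 0 < d3 := by omega
  have he2 : e % 2 = 0 := Int.even_iff.mp heven
  set P2 := gp d1 * gp d2 with hP2
  set P3 := P2 * gp d3 with hP3
  have hhilb : ∀ i : ℤ, hilbCI [d1, d2, d3, d4] i = cz (P3 * gp d4) i := by
    intro i
    have hprod : ([d1, d2, d3, d4].map fun d =>
        ∑ j ∈ Finset.range d, (Polynomial.X : Polynomial ℤ) ^ j).prod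
        = P3 * gp d4 := by
      simp [hP3, hP2, gp, mul_assoc]
    unfold hilbCI cz
    rw [hprod]
  have key : hilbCI [d1, d2, d3, d4] (e / 2) - hilbCI [d1, d2, d3, d4] (e / 2 - 1)
      = cz P3 (e / 2) - cz P3 (e / 2 - d4) := by
    rw [hhilb, hhilb]
    exact cz_diff P3 d4 (e / 2)
  have hsymm : cz P3 (e / 2 - d4) = cz P3 (e / 2 + 1) := by
    rw [hP3, hP2]
    rw [cz_sym d1 d2 d3 hd1 hd2 hd3 (e / 2 - (d4 : ℤ))]
    congr 1
    omega
  have key2 : cz P3 (e / 2) - cz P3 (e / 2 + 1)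
      = cz P2 (e / 2 + 1 - d3) - cz P2 (e / 2 + 1) := by
    have h := cz_diff P2 d3 (e / 2 + 1)
    rw [← hP3] at h
    have h1 : e / 2 + 1 - 1 = e / 2 := by ring
    rw [h1] at h
    linarith
  have hA0 : (0 : ℤ) ≤ e / 2 + 1 - d3 := by omega
  obtain ⟨na, hna⟩ : ∃ n : ℕ, (n : ℤ) = e / 2 + 1 - d3 := ⟨_, Int.toNat_of_nonneg hA0⟩
  obtain ⟨nb, hnb⟩ : ∃ n : ℕ, (n : ℤ) = e / 2 + 1 := ⟨_, Int.toNat_of_nonneg (by omega)⟩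
  have hvA : cz P2 (e / 2 + 1 - d3) = ((min d1 (na + 1) - (na + 1 - d2) : ℕ) : ℤ) := by
    rw [← hna]
    unfold cz
    rw [if_neg (by omega), hP2]
    rw [Int.toNat_natCast, coeff_gg]
  have hvB : cz P2 (e / 2 + 1) = ((min d1 (nb + 1) - (nb + 1 - d2) : ℕ) : ℤ) := by
    rw [← hnb]
    unfold cz
    rw [if_neg (by omega), hP2]
    rw [Int.toNat_natCast, coeff_gg]
  refine ⟨fun hc => ?_, fun hc1 hc2 => ?_, fun hc => ?_⟩ <;>
    rw [key, hsymm, key2, hvA, hvB] <;> omega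
end

section
/- Let n be odd and d be even, and let (h_i) be the Hilbert function of an artinian complete intersection of type (d,d,...,d) (n copies) in n variables. Then n divides h_{(n(d-1)-1)/2}, and h_{(n(d-1)-1)/2} = h_{(n(d-1)+1)/2}. -/
open Polynomial

section aux
variable (d : ℕ)

noncomputable def gpoly : Polynomial ℤ := ∑ j ∈ Finset.range d, X ^ j

lemma gpoly_coeff (j : ℕ) : (gpoly d).coeff j = if j < d then 1 else 0 := by
  simp [gpoly, coeff_X_pow, Finset.sum_ite_eq]

lemma gpoly_natDegree_le : (gpoly d).natDegree ≤ d - 1 := by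
  apply natDegree_le_iff_coeff_eq_zero.2
  intro j hj
  rw [gpoly_coeff]
  have : ¬ j < d := by omega
  simp [this]

lemma gpoly_reflect (hd : 0 < d) : reflect (d - 1) (gpoly d) = gpoly d := by
  ext i
  rw [coeff_reflect]
  rcases le_or_gt i (d - 1) with h | h
  · rw [revAt_le h, gpoly_coeff, gpoly_coeff]
    have h1 : d - 1 - i < d := by omega
    have h2 : i < d := by omega
    simp [h1, h2]
  · rw [revAt_eq_self_of_lt h]

lemma gpow_reflect (hd : 0 < d) (k : ℕ) :
    reflect (k * (d - 1)) (gpoly d ^ k) = gpoly d ^ k := by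
  induction k with
  | zero =>
      ext i
      rw [pow_zero, coeff_reflect]
      rcases Nat.eq_zero_or_pos i with h | h
      · simp [h]
      · rw [revAt_eq_self_of_lt (by omega)]
  | succ k ih =>
      have hdeg : (gpoly d ^ k).natDegree ≤ k * (d - 1) :=
        le_trans (natDegree_pow_le) (by
          exact Nat.mul_le_mul_left k (gpoly_natDegree_le d))
      calc reflect ((k + 1) * (d - 1)) (gpoly d ^ (k + 1))
          = reflect (k * (d - 1) + (d - 1)) (gpoly d ^ k * gpoly d) := by
            rw [pow_succ, add_mul, one_mul]
        _ = reflect (k * (d - 1)) (gpoly d ^ k) * reflect (d - 1) (gpoly d) :=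
            reflect_mul _ _ hdeg (gpoly_natDegree_le d)
        _ = gpoly d ^ (k + 1) := by rw [ih, gpoly_reflect d hd, pow_succ]

end aux

theorem ci_equigenerated_middle_divisible (n d : ℕ) (hn : Odd n) (hd : Even d) (hd0 : 0 < d) :
    (n : ℤ) ∣ hilbCI (List.replicate n d) (((n : ℤ) * (d - 1) - 1) / 2) ∧
    hilbCI (List.replicate n d) (((n : ℤ) * (d - 1) - 1) / 2) =
      hilbCI (List.replicate n d) (((n : ℤ) * (d - 1) + 1) / 2) := by
  set g := gpoly d with hg
  set N : ℕ := n * (d - 1) with hN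
  have hNodd : Odd N := hn.mul (Nat.Even.sub_odd hd0 hd odd_one)
  obtain ⟨m, hm⟩ := hNodd
  -- index computations
  have hcast : (n : ℤ) * ((d : ℤ) - 1) = (N : ℤ) := by
    have : ((d : ℤ) - 1) = ((d - 1 : ℕ) : ℤ) := by
      push_cast [Nat.cast_sub hd0]
      ring
    rw [this, hN]; push_cast; ring
  have hi1 : ((n : ℤ) * ((d : ℤ) - 1) - 1) / 2 = (m : ℤ) := by
    rw [hcast]; omega
  have hi2 : ((n : ℤ) * ((d : ℤ) - 1) + 1) / 2 = (m : ℤ) + 1 := by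
    rw [hcast]; omega
  have hh1 : hilbCI (List.replicate n d) (((n : ℤ) * (d - 1) - 1) / 2) = (g ^ n).coeff m := by
    rw [hi1, hilbCI]
    simp [List.map_replicate, List.prod_replicate, hg, gpoly]
  have hh2 : hilbCI (List.replicate n d) (((n : ℤ) * (d - 1) + 1) / 2)
      = (g ^ n).coeff (m + 1) := by
    rw [hi2, hilbCI]
    have : ¬ ((m : ℤ) + 1 < 0) := by omega
    rw [if_neg this]
    have : ((m : ℤ) + 1).toNat = m + 1 := by omega
    rw [this]
    simp [List.map_replicate, List.prod_replicate, hg, gpoly]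
  -- symmetry
  have hsym : (g ^ n).coeff m = (g ^ n).coeff (m + 1) := by
    conv_lhs => rw [← gpow_reflect d hd0 n]
    rw [coeff_reflect, ← hN]
    have hmN : m ≤ N := by omega
    rw [revAt_le hmN]
    congr 1
    omega
  -- divisibility: n ∣ k * a_k for all k
  have hdvd : ∀ k : ℕ, (n : ℤ) ∣ (k : ℤ) * (g ^ n).coeff k := by
    intro k
    cases k with
    | zero => simp
    | succ k =>
        have hder : (derivative (g ^ n)).coeff k
            = (g ^ n).coeff (k + 1) * ((k : ℤ) + 1) := by
          rw [coeff_derivative]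
        have : (derivative (g ^ n)).coeff k
            = (n : ℤ) * ((g ^ (n - 1) * derivative g).coeff k) := by
          rw [derivative_pow, mul_assoc, coeff_C_mul]
        refine ⟨(g ^ (n - 1) * derivative g).coeff k, ?_⟩
        rw [← this, hder]
        push_cast; ring
  have hd1 := hdvd m
  have hd2 := hdvd (m + 1)
  rw [← hsym] at hd2
  have : (n : ℤ) ∣ (g ^ n).coeff m := by
    have := dvd_sub hd2 hd1
    have heq : ((m : ℤ) + 1) * (g ^ n).coeff m - (m : ℤ) * (g ^ n).coeff m
        = (g ^ n).coeff m := by ring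
    rw [show (((m : ℕ) + 1 : ℕ) : ℤ) = (m : ℤ) + 1 by push_cast; ring] at this
    rwa [heq] at this
  exact ⟨by rwa [hh1], by rw [hh1, hh2, hsym]⟩
end

section
/- Let (h_i) be the Hilbert function of the artinian complete intersection of type (d,d,d,d) in four variables. Then with e = 4d-4, we have h_{e/2} - h_{e/2-1} = d. -/
open Polynomial PowerSeries

noncomputable def P (d : ℕ) : Polynomial ℤ := ∑ j ∈ Finset.range d, (Polynomial.X : Polynomial ℤ) ^ j

lemma one_sub_X_mul_P (d : ℕ) :
    ((1 - PowerSeries.X) * ((P d : Polynomial ℤ) : ℤ⟦X⟧)) = 1 - PowerSeries.X ^ d := by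
  have h : ((1 : Polynomial ℤ) - Polynomial.X) * P d = 1 - Polynomial.X ^ d := by
    have := geom_sum_mul (Polynomial.X : Polynomial ℤ) d
    unfold P
    linear_combination -this
  have := congrArg (Polynomial.coeToPowerSeries.ringHom (R := ℤ)) h
  simpa only [map_mul, map_sub, map_one, map_pow,
    Polynomial.coeToPowerSeries.ringHom_apply, Polynomial.coe_X] using this

lemma key (m : ℕ) :
    ((P (m + 2)) ^ 4).coeff (2 * m + 2) - ((P (m + 2)) ^ 4).coeff (2 * m + 1)
      = (m + 2 : ℤ) := by
  set d := m + 2 with hd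
  set A : ℤ⟦X⟧ := ((P d : Polynomial ℤ) : ℤ⟦X⟧) with hA
  have hmain : (1 - PowerSeries.X) * A ^ 4
      = (1 - PowerSeries.X ^ d) ^ 4 * (invOneSubPow ℤ 3).val := by
    have h3 : ((invOneSubPow ℤ 3).val) * ((1 : ℤ⟦X⟧) - PowerSeries.X) ^ 3 = 1 := by
      have := (invOneSubPow ℤ 3).val_inv
      rwa [invOneSubPow_inv_eq_one_sub_pow] at this
    have h4 : ((1 : ℤ⟦X⟧) - PowerSeries.X) ^ 4 * A ^ 4 = (1 - PowerSeries.X ^ d) ^ 4 := by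
      rw [← mul_pow, one_sub_X_mul_P]
    calc (1 - PowerSeries.X) * A ^ 4
        = ((1 - PowerSeries.X) ^ 4 * A ^ 4) * (invOneSubPow ℤ 3).val
          - ((1 - PowerSeries.X) * A ^ 4) * ((invOneSubPow ℤ 3).val * ((1:ℤ⟦X⟧) - PowerSeries.X) ^ 3 - 1) := by
          ring
      _ = (1 - PowerSeries.X ^ d) ^ 4 * (invOneSubPow ℤ 3).val := by rw [h3, h4]; ring
  -- coefficient extraction
  have hc : ((P d) ^ 4).coeff (2 * m + 2) - ((P d) ^ 4).coeff (2 * m + 1)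
      = PowerSeries.coeff (R := ℤ) (2 * m + 2) ((1 - PowerSeries.X) * A ^ 4) := by
    rw [sub_mul, one_mul, map_sub]
    have : (2 * m + 2) = (2 * m + 1) + 1 := by ring
    rw [this, PowerSeries.coeff_succ_X_mul]
    simp [hA, ← Polynomial.coe_pow, Polynomial.coeff_coe]
  rw [hc, hmain]
  have hval : (invOneSubPow ℤ 3).val = PowerSeries.mk fun n => ((2 + n).choose 2 : ℤ) := by
    rw [show (3:ℕ) = 2 + 1 from rfl, invOneSubPow_val_succ_eq_mk_add_choose]
  set B : ℤ⟦X⟧ := (invOneSubPow ℤ 3).val with hB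
  have hexp : ((1 : ℤ⟦X⟧) - PowerSeries.X ^ d) ^ 4 * B
      = B - (4:ℤ) • (PowerSeries.X ^ d * B) + (6:ℤ) • (PowerSeries.X ^ (d*2) * B)
        - (4:ℤ) • (PowerSeries.X ^ (d*3) * B) + PowerSeries.X ^ (d*4) * B := by
    simp only [zsmul_eq_mul, pow_mul]
    push_cast
    ring
  rw [hexp, hval]
  simp only [map_sub, map_add, map_zsmul, PowerSeries.coeff_smul, PowerSeries.coeff_X_pow_mul',
    PowerSeries.coeff_mk, smul_eq_mul]
  have h1 : d ≤ 2 * m + 2 := by omega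
  have h2 : ¬ (d * 2 ≤ 2 * m + 2) := by omega
  have h3 : ¬ (d * 3 ≤ 2 * m + 2) := by omega
  have h4 : ¬ (d * 4 ≤ 2 * m + 2) := by omega
  rw [if_pos h1, if_neg h2, if_neg h3, if_neg h4]
  have key2 : ∀ n : ℕ, 2 * ((2 + n).choose 2) = (n + 2) * (n + 1) := by
    intro n
    rw [Nat.choose_two_right, show 2 + n - 1 = n + 1 by omega, show 2 + n = n + 2 by omega]
    exact Nat.mul_div_cancel' (Even.two_dvd (by simpa [mul_comm] using Nat.even_mul_succ_self (n+1)))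
  have hm : 2 * m + 2 - d = m := by omega
  rw [hm]
  have z1 := congrArg (fun n : ℕ => (n : ℤ)) (key2 (2 * m + 2))
  have z2 := congrArg (fun n : ℕ => (n : ℤ)) (key2 m)
  push_cast at z1 z2 ⊢
  nlinarith [z1, z2]

theorem ci_dddd_middle_difference (d : ℕ) (hd0 : 0 < d) (e : ℤ) (he : e = 4 * (d : ℤ) - 4) :
    hilbCI [d, d, d, d] (e / 2) - hilbCI [d, d, d, d] (e / 2 - 1) = d := by
  subst he
  match d, hd0 with
  | 1, _ =>
    norm_num [hilbCI]
  | (m + 2), _ =>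
    have h1 : (4 * ((m + 2 : ℕ) : ℤ) - 4) / 2 = ((2 * m + 2 : ℕ) : ℤ) := by
      push_cast; omega
    have h2 : ((2 * m + 2 : ℕ) : ℤ) - 1 = ((2 * m + 1 : ℕ) : ℤ) := by
      push_cast; ring
    rw [h1, h2]
    have hni : ∀ n : ℕ, hilbCI [m + 2, m + 2, m + 2, m + 2] (n : ℤ)
        = ((P (m + 2)) ^ 4).coeff n := by
      intro n
      rw [hilbCI, if_neg (by omega)]
      simp only [List.map_cons, List.map_nil, List.prod_cons, List.prod_nil, Int.toNat_natCast]
      congr 1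
      show P (m+2) * (P (m+2) * (P (m+2) * (P (m+2) * 1))) = P (m+2) ^ 4
      ring
    rw [hni, hni, key m]
    push_cast
    ring
end

section
/- Let k be a field of characteristic zero, R = k[x,y], and I an artinian homogeneous ideal. Fix a degree i, and suppose the forms of degree i in I have no common factor of positive degree (GCD is a unit). Then for every nonzero linear form ℓ, the multiplication map ×ℓ : [R/I]_{i-1} → [R/I]_i has maximal rank (is injective or surjective). -/
open MvPolynomial

/-- The degree `j` graded component of `R/I`, where `R = k[x_1,…,x_m]`:
the image of the homogeneous polynomials of degree `j` in the quotient. -/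
noncomputable def quotComponent {k : Type*} [Field k] {m : ℕ}
    (I : Ideal (MvPolynomial (Fin m) k)) (j : ℕ) :
    Submodule k (MvPolynomial (Fin m) k ⧸ I) :=
  Submodule.map (Ideal.Quotient.mkₐ k I).toLinearMap
    (MvPolynomial.homogeneousSubmodule (Fin m) k j)

/-- Multiplication by `u` from `[R/I]_j` to `[R/I]_{j+1}` has maximal rank:
it is injective or surjective. -/
def mulMaxRank {k : Type*} [Field k] {m : ℕ} (I : Ideal (MvPolynomial (Fin m) k))
    (u : MvPolynomial (Fin m) k ⧸ I) (j : ℕ) : Prop :=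
  (∀ x ∈ quotComponent I j, u * x = 0 → x = 0) ∨
  (∀ y ∈ quotComponent I (j + 1), ∃ x ∈ quotComponent I j, u * x = y)

private lemma fin2_cases : ∀ (x y z : Fin 2), x ≠ y → z = x ∨ z = y := by decide

private lemma fin2_degree (m : Fin 2 →₀ ℕ) : m.degree = m 0 + m 1 := by
  rw [Finsupp.degree_apply, Finset.sum_subset (Finset.subset_univ m.support)]
  · exact Fin.sum_univ_two m
  · intro i _ hi
    simpa using Finsupp.notMem_support_iff.mp hi

private lemma degree_add' (m1 m2 : Fin 2 →₀ ℕ) :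
    (m1 + m2).degree = m1.degree + m2.degree := by
  simp [fin2_degree]; ring

/-- A homogeneous polynomial of degree 1 in two variables is a linear form. -/
private lemma linear_rep {k : Type*} [Field k] {ℓ : MvPolynomial (Fin 2) k}
    (hl : ℓ.IsHomogeneous 1) :
    ℓ = C (coeff (Finsupp.single 0 1) ℓ) * X 0 + C (coeff (Finsupp.single 1 1) ℓ) * X 1 := by
  ext m
  rw [coeff_add, coeff_C_mul, coeff_C_mul, coeff_X', coeff_X']
  by_cases hm : m.degree = 1
  · have hsum : m 0 + m 1 = 1 := by rw [← fin2_degree]; exact hm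
    have hcase : (m 0 = 1 ∧ m 1 = 0) ∨ (m 0 = 0 ∧ m 1 = 1) := by omega
    rcases hcase with ⟨h0, h1⟩ | ⟨h0, h1⟩
    · have hm0 : m = Finsupp.single 0 1 := by
        ext j; fin_cases j <;> simp [Finsupp.single_apply, h0, h1]
      have hne : Finsupp.single (1 : Fin 2) 1 ≠ m := by
        rw [hm0]; intro h
        have := DFunLike.congr_fun h (0 : Fin 2)
        simp [Finsupp.single_apply] at this
      rw [if_pos hm0.symm, if_neg hne, hm0]
      ring
    · have hm1 : m = Finsupp.single 1 1 := by
        ext j; fin_cases j <;> simp [Finsupp.single_apply, h0, h1]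
      have hne : Finsupp.single (0 : Fin 2) 1 ≠ m := by
        rw [hm1]; intro h
        have := DFunLike.congr_fun h (0 : Fin 2)
        simp [Finsupp.single_apply] at this
      rw [if_neg hne, if_pos hm1.symm, hm1]
      ring
  · have h0 : Finsupp.single (0 : Fin 2) 1 ≠ m := by
      rintro rfl; exact hm (by rw [fin2_degree]; simp)
    have h1 : Finsupp.single (1 : Fin 2) 1 ≠ m := by
      rintro rfl; exact hm (by rw [fin2_degree]; simp)
    rw [hl.coeff_eq_zero hm, if_neg h0, if_neg h1]
    ring

/-- Evaluating a homogeneous polynomial at scalar multiples of a single variable. -/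
private lemma aeval_line {k : Type*} [Field k] {p : MvPolynomial (Fin 2) k} {d : ℕ}
    (hp : p.IsHomogeneous d) (u : Fin 2) (e : Fin 2 → k) :
    aeval (fun i => C (e i) * X u) p = C (eval e p) * (X u : MvPolynomial (Fin 2) k) ^ d := by
  conv_lhs => rw [p.as_sum]
  conv_rhs => rw [p.as_sum]
  rw [map_sum, map_sum, map_sum, Finset.sum_mul]
  apply Finset.sum_congr rfl
  intro m hm
  have hdeg : m.degree = d := by
    by_contra h
    exact mem_support_iff.mp hm (hp.coeff_eq_zero h)
  rw [aeval_monomial, eval_monomial]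
  rw [Finsupp.prod, Finsupp.prod]
  simp only [mul_pow, Finset.prod_mul_distrib, Finset.prod_pow_eq_pow_sum]
  rw [← Finsupp.degree_apply, hdeg]
  simp only [algebraMap_eq, map_mul, map_prod, map_pow]
  ring

/-- Substitution congruence modulo the linear form. -/
private lemma sub_aeval_mem {k : Type*} [Field k] (ℓ : MvPolynomial (Fin 2) k)
    (u v : Fin 2) (huv : u ≠ v) (a b : k) (hb : b ≠ 0)
    (hrep : ℓ = C a * X u + C b * X v) (e : Fin 2 → k)
    (he_u : e u = 1) (he_v : e v = -(a/b))
    (p : MvPolynomial (Fin 2) k) :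
    p - aeval (fun i => C (e i) * X u) p ∈ Ideal.span {ℓ} := by
  induction p using MvPolynomial.induction_on with
  | C r => simp [algebraMap_eq]
  | add p q hp hq =>
    have : p + q - aeval (fun i => C (e i) * X u) (p + q) =
        (p - aeval (fun i => C (e i) * X u) p) + (q - aeval (fun i => C (e i) * X u) q) := by
      rw [map_add]; ring
    rw [this]; exact Ideal.add_mem _ hp hq
  | mul_X p j hp =>
    have key : (X j : MvPolynomial (Fin 2) k) - aeval (R := k) (fun i => C (e i) * X u) (X j) ∈
        Ideal.span {ℓ} := by
      have hj : j = u ∨ j = v := fin2_cases u v j huv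
      rcases hj with rfl | rfl
      · rw [aeval_X, he_u, map_one, one_mul, sub_self]
        exact Ideal.zero_mem _
      · rw [aeval_X, he_v]
        have : (X j : MvPolynomial (Fin 2) k) - C (-(a/b)) * X u = C b⁻¹ * ℓ := by
          rw [hrep]
          have h1 : (C b⁻¹ : MvPolynomial (Fin 2) k) * (C a * X u + C b * X j)
              = C (b⁻¹ * a) * X u + C (b⁻¹ * b) * X j := by
            rw [map_mul, map_mul]; ring
          have h2 : b⁻¹ * a = a / b := by field_simp
          rw [h1, inv_mul_cancel₀ hb, map_one, one_mul, map_neg, h2]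
          ring
        rw [this]
        exact Ideal.mem_span_singleton.mpr (Dvd.intro_left _ rfl)
    have : p * X j - aeval (R := k) (fun i => C (e i) * X u) (p * X j) =
        (p - aeval (R := k) (fun i => C (e i) * X u) p) * X j +
        aeval (R := k) (fun i => C (e i) * X u) p *
          ((X j : MvPolynomial (Fin 2) k) - aeval (R := k) (fun i => C (e i) * X u) (X j)) := by
      rw [map_mul]; ring
    rw [this]
    exact Ideal.add_mem _ (Ideal.mul_mem_right _ _ hp) (Ideal.mul_mem_left _ _ key)

/-- If `ℓ` is homogeneous of degree 1 and `ℓ * h` is homogeneous of degree `d ≥ 1`, then we may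
replace `h` by its homogeneous component of degree `d - 1`. -/
private lemma mul_homogeneousComponent {k : Type*} [Field k]
    {ℓ h : MvPolynomial (Fin 2) k} {d : ℕ} (hl : ℓ.IsHomogeneous 1) (hd : 1 ≤ d)
    (hp : (ℓ * h).IsHomogeneous d) :
    ℓ * homogeneousComponent (d - 1) h = ℓ * h := by
  ext m
  by_cases hm : m.degree = d
  · rw [coeff_mul, coeff_mul]
    apply Finset.sum_congr rfl
    rintro ⟨m1, m2⟩ hx
    rw [Finset.HasAntidiagonal.mem_antidiagonal] at hx
    dsimp only at hx ⊢
    rcases eq_or_ne (coeff m1 ℓ) 0 with h1 | h1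
    · rw [h1, zero_mul, zero_mul]
    · have hm1 : m1.degree = 1 := by
        by_contra hc; exact h1 (hl.coeff_eq_zero hc)
      have hm2 : m2.degree = d - 1 := by
        have := congrArg Finsupp.degree hx
        rw [degree_add'] at this
        omega
      rw [coeff_homogeneousComponent, if_pos hm2]
  · rw [hp.coeff_eq_zero hm, coeff_mul]
    apply Finset.sum_eq_zero
    rintro ⟨m1, m2⟩ hx
    rw [Finset.HasAntidiagonal.mem_antidiagonal] at hx
    dsimp only at hx ⊢
    rcases eq_or_ne (coeff m1 ℓ) 0 with h1 | h1
    · rw [h1, zero_mul]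
    · have hm1 : m1.degree = 1 := by
        by_contra hc; exact h1 (hl.coeff_eq_zero hc)
      rw [coeff_homogeneousComponent, if_neg, mul_zero]
      intro hc
      apply hm
      have := congrArg Finsupp.degree hx
      rw [degree_add'] at this
      omega

private lemma surj_aux {k : Type*} [Field k] (I : Ideal (MvPolynomial (Fin 2) k))
    (i : ℕ) (hi : 0 < i) (ℓ g : MvPolynomial (Fin 2) k) (hl : ℓ.IsHomogeneous 1)
    (hgI : g ∈ I) (hg : g.IsHomogeneous i) (hgd : ¬ ℓ ∣ g)
    (u v : Fin 2) (huv : u ≠ v) (a b : k) (hb : b ≠ 0)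
    (hrep : ℓ = C a * X u + C b * X v) :
    ∀ y ∈ quotComponent I (i - 1 + 1), ∃ x ∈ quotComponent I (i - 1),
      (Ideal.Quotient.mk I ℓ) * x = y := by
  have hi1 : i - 1 + 1 = i := Nat.succ_pred_eq_of_pos hi
  rw [hi1]
  intro y hy
  simp only [quotComponent, Submodule.mem_map, AlgHom.toLinearMap_apply,
    Ideal.Quotient.mkₐ_eq_mk, mem_homogeneousSubmodule] at hy
  obtain ⟨G, hG, rfl⟩ := hy
  classical
  set e : Fin 2 → k := fun j => if j = u then 1 else -(a/b) with he
  have he_u : e u = 1 := by simp [he]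
  have he_v : e v = -(a/b) := by simp [he, Ne.symm huv]
  set ψ : MvPolynomial (Fin 2) k →ₐ[k] MvPolynomial (Fin 2) k :=
    aeval (fun i => C (e i) * X u) with hψ
  have hGψ : ψ G = C (eval e G) * X u ^ i := aeval_line hG u e
  have hgψ : ψ g = C (eval e g) * X u ^ i := aeval_line hg u e
  have hmemG : G - ψ G ∈ Ideal.span {ℓ} := sub_aeval_mem ℓ u v huv a b hb hrep e he_u he_v G
  have hmemg : g - ψ g ∈ Ideal.span {ℓ} := sub_aeval_mem ℓ u v huv a b hb hrep e he_u he_v g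
  have heg : eval e g ≠ 0 := by
    intro h0
    apply hgd
    apply Ideal.mem_span_singleton.mp
    have : ψ g = 0 := by rw [hgψ, h0, map_zero, zero_mul]
    simpa [this] using hmemg
  set t : k := eval e G / eval e g with ht
  have hψeq : ψ G = C t * ψ g := by
    rw [hGψ, hgψ, ← mul_assoc, ← map_mul, ht, div_mul_cancel₀ _ heg]
  have hmem : G - C t * g ∈ Ideal.span {ℓ} := by
    have h2 : C t * (g - ψ g) ∈ Ideal.span {ℓ} := Ideal.mul_mem_left _ _ hmemg
    have heq : G - C t * g = (G - ψ G) - C t * (g - ψ g) := by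
      rw [mul_sub, hψeq]; ring
    rw [heq]
    exact Ideal.sub_mem _ hmemG h2
  obtain ⟨h, hh⟩ := Ideal.mem_span_singleton.mp hmem
  have hhom : (ℓ * h).IsHomogeneous i := by
    rw [← hh]
    exact hG.sub (hg.C_mul t)
  have hkey : ℓ * homogeneousComponent (i - 1) h = ℓ * h :=
    mul_homogeneousComponent hl hi hhom
  refine ⟨Ideal.Quotient.mk I (homogeneousComponent (i - 1) h), ?_, ?_⟩
  · simp only [quotComponent, Submodule.mem_map, AlgHom.toLinearMap_apply,
      Ideal.Quotient.mkₐ_eq_mk, mem_homogeneousSubmodule]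
    exact ⟨_, homogeneousComponent_isHomogeneous _ _, rfl⟩
  · rw [← map_mul, hkey, ← hh]
    rw [map_sub, map_mul]
    rw [Ideal.Quotient.eq_zero_iff_mem.mpr hgI, mul_zero, sub_zero]

theorem codim_two_no_gcd_maxRank {k : Type*} [Field k] [CharZero k]
    (I : Ideal (MvPolynomial (Fin 2) k))
    (hart : FiniteDimensional k (MvPolynomial (Fin 2) k ⧸ I))
    (i : ℕ) (hi : 0 < i)
    (hgcd : ∀ F : MvPolynomial (Fin 2) k,
      (∀ g ∈ I, MvPolynomial.IsHomogeneous g i → F ∣ g) → IsUnit F)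
    (ℓ : MvPolynomial (Fin 2) k) (hℓ : ℓ ∈ MvPolynomial.homogeneousSubmodule (Fin 2) k 1)
    (hℓ0 : ℓ ≠ 0) :
    mulMaxRank I (Ideal.Quotient.mk I ℓ) (i - 1) := by
  have hl : ℓ.IsHomogeneous 1 := hℓ
  by_cases hall : ∀ g ∈ I, MvPolynomial.IsHomogeneous g i → ℓ ∣ g
  · exfalso
    obtain ⟨w, hw⟩ := IsUnit.exists_right_inv (hgcd ℓ hall)
    have h0 : constantCoeff ℓ = 0 := by
      rw [constantCoeff_eq]
      exact hl.coeff_eq_zero (by simp)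
    have := congrArg constantCoeff hw
    rw [map_mul, h0, zero_mul, map_one] at this
    exact zero_ne_one this
  · push_neg at hall
    obtain ⟨g, hgI, hghom, hgd⟩ := hall
    right
    set a := coeff (Finsupp.single 0 1) ℓ with ha
    set b := coeff (Finsupp.single 1 1) ℓ with hb
    have hrep : ℓ = C a * X 0 + C b * X 1 := linear_rep hl
    rcases eq_or_ne b 0 with hb0 | hb0
    · have ha0 : a ≠ 0 := by
        intro ha0
        apply hℓ0
        rw [hrep, ha0, hb0]; simp
      have hrep' : ℓ = C (0 : k) * X 1 + C a * X 0 := by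
        rw [hrep, hb0]; simp
      exact surj_aux I i hi ℓ g hl hgI hghom hgd 1 0 (by decide) 0 a ha0 hrep'
    · exact surj_aux I i hi ℓ g hl hgI hghom hgd 0 1 (by decide) a b hb0 hrep
end

section
/- Let A = R/I be a standard graded artinian Gorenstein k-algebra with socle degree e (i.e., [A]_e ≅ k and multiplication [A]_i × [A]_{e-i} → [A]_e is a perfect pairing for all i). Set i = ⌊(e-1)/2⌋. Then a linear form ℓ ∈ [A]_1 is a weak Lefschetz element of A if and only if the single multiplication map ×ℓ : [A]_i → [A]_{i+1} has maximal rank. -/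
set_option maxHeartbeats 1000000
set_option synthInstance.maxHeartbeats 400000

open MvPolynomial

/-- `ℓ` is a weak Lefschetz element of `R/I`: every multiplication map
`×ℓ : [R/I]_j → [R/I]_{j+1}` has maximal rank. -/
def IsWeakLefschetzElem {k : Type*} [Field k] {m : ℕ}
    (I : Ideal (MvPolynomial (Fin m) k)) (ℓ : MvPolynomial (Fin m) k) : Prop :=
  ∀ j : ℕ, mulMaxRank I (Ideal.Quotient.mk I ℓ) j

section Aux

variable {k : Type*} [Field k] {m : ℕ} (I : Ideal (MvPolynomial (Fin m) k))

lemma mem_quotComponent_iff {j : ℕ} {x : MvPolynomial (Fin m) k ⧸ I} :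
    x ∈ quotComponent I j ↔
      ∃ p : MvPolynomial (Fin m) k, p.IsHomogeneous j ∧ Ideal.Quotient.mk I p = x := by
  simp [quotComponent, Submodule.mem_map, MvPolynomial.mem_homogeneousSubmodule]

lemma mem_quotComponent_mul {a b : ℕ} {x y : MvPolynomial (Fin m) k ⧸ I}
    (hx : x ∈ quotComponent I a) (hy : y ∈ quotComponent I b) :
    x * y ∈ quotComponent I (a + b) := by
  rw [mem_quotComponent_iff] at hx hy ⊢
  obtain ⟨p, hp, rfl⟩ := hx
  obtain ⟨q, hq, rfl⟩ := hy
  exact ⟨p * q, hp.mul hq, by rw [map_mul]⟩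

/-- The multiplication pairing between graded components. -/
noncomputable def pairLMap (a b : ℕ) :
    quotComponent I a →ₗ[k] quotComponent I b →ₗ[k] quotComponent I (a + b) :=
  LinearMap.mk₂ k (fun x y => ⟨x.1 * y.1, mem_quotComponent_mul I x.2 y.2⟩)
    (fun x x' y => by ext; simp [add_mul])
    (fun c x y => by ext; simp [smul_mul_assoc])
    (fun x y y' => by ext; simp [mul_add])
    (fun c x y => by ext; simp [mul_smul_comm])

/-- The induced map to the dual, given an identification of the socle with `k`. -/
noncomputable def pairDual (a b : ℕ) (ψ : quotComponent I (a + b) ≃ₗ[k] k) :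
    quotComponent I a →ₗ[k] Module.Dual k (quotComponent I b) :=
  (LinearMap.llcomp k (quotComponent I b) (quotComponent I (a + b)) k ψ.toLinearMap).comp
    (pairLMap I a b)

lemma pairDual_injective {e : ℕ}
    (hpair : ∀ i ≤ e, ∀ x ∈ quotComponent I i, x ≠ 0 →
      ∃ y ∈ quotComponent I (e - i), x * y ≠ 0)
    {a b : ℕ} (hab : a + b = e) (ψ : quotComponent I (a + b) ≃ₗ[k] k) :
    Function.Injective (pairDual I a b ψ) := by
  rw [injective_iff_map_eq_zero]
  intro x hx
  by_contra hne
  have hx1 : (x : MvPolynomial (Fin m) k ⧸ I) ≠ 0 :=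
    fun h0 => hne (ZeroMemClass.coe_eq_zero.mp h0)
  obtain ⟨y, hy, hxy⟩ := hpair a (by omega) x.1 x.2 hx1
  have hy' : y ∈ quotComponent I b := by
    have : e - a = b := by omega
    rwa [this] at hy
  have := congrFun (congrArg DFunLike.coe hx) ⟨y, hy'⟩
  simp only [pairDual, LinearMap.comp_apply, LinearMap.llcomp_apply,
    LinearMap.zero_apply] at this
  apply hxy
  have hz : (pairLMap I a b x ⟨y, hy'⟩ : quotComponent I (a + b)) = 0 := by
    exact ψ.injective (by simpa using this)
  simpa [pairLMap, Subtype.ext_iff] using hz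

lemma finrank_quotComponent_symm {e : ℕ}
    [FiniteDimensional k (MvPolynomial (Fin m) k ⧸ I)]
    (hsoc : Module.finrank k (quotComponent I e) = 1)
    (hpair : ∀ i ≤ e, ∀ x ∈ quotComponent I i, x ≠ 0 →
      ∃ y ∈ quotComponent I (e - i), x * y ≠ 0)
    {a b : ℕ} (hab : a + b = e) :
    Module.finrank k (quotComponent I a) = Module.finrank k (quotComponent I b) := by
  have key : ∀ a b : ℕ, a + b = e →
      Module.finrank k (quotComponent I a) ≤ Module.finrank k (quotComponent I b) := by
    intro a b hab
    have h1 : Module.finrank k (quotComponent I (a + b)) = 1 := by rw [hab, hsoc]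
    have ψ : quotComponent I (a + b) ≃ₗ[k] k :=
      LinearEquiv.ofFinrankEq _ _ (by rw [h1, Module.finrank_self])
    calc Module.finrank k (quotComponent I a)
        ≤ Module.finrank k (Module.Dual k (quotComponent I b)) :=
          LinearMap.finrank_le_finrank_of_injective (pairDual_injective I hpair hab ψ)
      _ = Module.finrank k (quotComponent I b) := Subspace.dual_finrank_eq
  exact le_antisymm (key a b hab) (key b a (by omega))

variable {I}

/-- Multiplication by an element of `[R/I]_1` as a linear map between components. -/
noncomputable def mulL {u : MvPolynomial (Fin m) k ⧸ I} (hu : u ∈ quotComponent I 1)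
    (b : ℕ) : quotComponent I b →ₗ[k] quotComponent I (b + 1) where
  toFun x := ⟨u * x.1, by simpa [Nat.add_comm] using mem_quotComponent_mul I hu x.2⟩
  map_add' x y := by ext; simp [mul_add]
  map_smul' c x := by ext; simp [mul_smul_comm]

/-- Duality: surjectivity in degree `b → b+1` implies injectivity in the
complementary degree `a → a+1`, where `a + b + 1 = e`. -/
lemma inj_of_surj {e : ℕ}
    (hpair : ∀ i ≤ e, ∀ x ∈ quotComponent I i, x ≠ 0 →
      ∃ y ∈ quotComponent I (e - i), x * y ≠ 0)
    {u : MvPolynomial (Fin m) k ⧸ I}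
    {a b : ℕ} (hab : a + b + 1 = e)
    (hsurj : ∀ y ∈ quotComponent I (b + 1), ∃ x ∈ quotComponent I b, u * x = y) :
    ∀ x ∈ quotComponent I a, u * x = 0 → x = 0 := by
  intro x hx hux
  by_contra hne
  obtain ⟨y, hy, hxy⟩ := hpair a (by omega) x hx hne
  have hy' : y ∈ quotComponent I (b + 1) := by
    have : e - a = b + 1 := by omega
    rwa [this] at hy
  obtain ⟨z, hz, rfl⟩ := hsurj y hy'
  apply hxy
  calc x * (u * z) = (u * x) * z := by ring
    _ = 0 := by rw [hux, zero_mul]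

/-- Duality: injectivity in degree `a → a+1` implies surjectivity in the
complementary degree `b → b+1`, where `a + b + 1 = e`. -/
lemma surj_of_inj {e : ℕ}
    [FiniteDimensional k (MvPolynomial (Fin m) k ⧸ I)]
    (hsoc : Module.finrank k (quotComponent I e) = 1)
    (hpair : ∀ i ≤ e, ∀ x ∈ quotComponent I i, x ≠ 0 →
      ∃ y ∈ quotComponent I (e - i), x * y ≠ 0)
    {u : MvPolynomial (Fin m) k ⧸ I} (hu : u ∈ quotComponent I 1)
    {a b : ℕ} (hab : a + b + 1 = e)
    (hinj : ∀ x ∈ quotComponent I a, u * x = 0 → x = 0) :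
    ∀ y ∈ quotComponent I (b + 1), ∃ x ∈ quotComponent I b, u * x = y := by
  by_contra hns
  push_neg at hns
  obtain ⟨y, hy, hyn⟩ := hns
  -- the range of multiplication is a proper subspace
  have hlt : LinearMap.range (mulL hu b) < ⊤ := by
    rw [lt_top_iff_ne_top]
    intro htop
    have : (⟨y, hy⟩ : quotComponent I (b + 1)) ∈ LinearMap.range (mulL hu b) :=
      htop ▸ Submodule.mem_top
    obtain ⟨z, hz⟩ := this
    exact hyn z.1 z.2 (by simpa [mulL, Subtype.ext_iff] using hz)
  obtain ⟨φ, hφ, hφ0⟩ := Submodule.exists_dual_map_eq_bot_of_lt_top hlt inferInstance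
  have hab' : a + (b + 1) = e := by omega
  have h1 : Module.finrank k (quotComponent I (a + (b + 1))) = 1 := by rw [hab', hsoc]
  have ψ : quotComponent I (a + (b + 1)) ≃ₗ[k] k :=
    LinearEquiv.ofFinrankEq _ _ (by rw [h1, Module.finrank_self])
  have hPinj := pairDual_injective I hpair hab' ψ
  have hPsurj : Function.Surjective (pairDual I a (b + 1) ψ) := by
    rw [← LinearMap.injective_iff_surjective_of_finrank_eq_finrank]
    · exact hPinj
    · rw [Subspace.dual_finrank_eq]
      exact finrank_quotComponent_symm I hsoc hpair hab'
  obtain ⟨x, hxφ⟩ := hPsurj φ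
  have hxne : x ≠ 0 := by
    rintro rfl
    rw [map_zero] at hxφ
    exact hφ hxφ.symm
  -- pairing of x with the range of multiplication vanishes
  have hker : ∀ z ∈ quotComponent I b, x.1 * (u * z) = 0 := by
    intro z hz
    have hmem : mulL hu b ⟨z, hz⟩ ∈ LinearMap.range (mulL hu b) := ⟨_, rfl⟩
    have : φ (mulL hu b ⟨z, hz⟩) = 0 := by
      have := hφ0 ▸ Submodule.mem_map_of_mem (f := φ) hmem
      simpa using this
    rw [← hxφ] at this
    simp only [pairDual, LinearMap.comp_apply, LinearMap.llcomp_apply] at this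
    have hz0 : (pairLMap I a (b + 1) x (mulL hu b ⟨z, hz⟩) :
        quotComponent I (a + (b + 1))) = 0 := ψ.injective (by simpa using this)
    simpa [pairLMap, mulL, Subtype.ext_iff] using hz0
  -- hence u * x pairs to zero with everything in degree b, so u * x = 0
  have hux : u * x.1 = 0 := by
    by_contra hne
    have hmem : u * x.1 ∈ quotComponent I (a + 1) := by
      simpa [Nat.add_comm] using mem_quotComponent_mul I hu x.2
    obtain ⟨z, hz, hzz⟩ := hpair (a + 1) (by omega) _ hmem hne
    have hz' : z ∈ quotComponent I b := by
      have : e - (a + 1) = b := by omega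
      rwa [this] at hz
    exact hzz (by have := hker z hz'; calc u * x.1 * z = x.1 * (u * z) := by ring
                                           _ = 0 := hker z hz')
  have : x.1 = 0 := hinj x.1 x.2 hux
  exact hxne (Subtype.ext this)

/-- Standard gradedness: surjectivity of `×u` propagates upwards. -/
lemma surj_succ {u : MvPolynomial (Fin m) k ⧸ I} (hu : u ∈ quotComponent I 1) {j : ℕ}
    (hsurj : ∀ y ∈ quotComponent I (j + 1), ∃ x ∈ quotComponent I j, u * x = y) :
    ∀ y ∈ quotComponent I (j + 2), ∃ x ∈ quotComponent I (j + 1), u * x = y := by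
  have key : ∀ y ∈ quotComponent I (j + 2),
      y ∈ (quotComponent I (j + 1)).map (LinearMap.mulLeft k u) := by
    intro y hy
    rw [mem_quotComponent_iff] at hy
    obtain ⟨p, hp, rfl⟩ := hy
    rw [← p.support_sum_monomial_coeff, map_sum]
    apply Submodule.sum_mem
    intro d hd
    have hdeg : d.degree = j + 2 := by
      have := hp (MvPolynomial.mem_support_iff.mp hd)
      rwa [Finsupp.degree_eq_weight_one]
    have hdne : d ≠ 0 := by
      intro h
      rw [h, map_zero] at hdeg
      omega
    obtain ⟨i, hi⟩ := Finsupp.support_nonempty_iff.mpr hdne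
    have hle : Finsupp.single i 1 ≤ d := by
      rw [Finsupp.single_le_iff]
      exact Nat.one_le_iff_ne_zero.mpr (Finsupp.mem_support_iff.mp hi)
    set d' := d - Finsupp.single i 1 with hd'
    have hdd : Finsupp.single i 1 + d' = d := add_tsub_cancel_of_le hle
    have hdeg' : d'.degree = j + 1 := by
      have h1 : (Finsupp.single i 1).degree = 1 := by
        simp [Finsupp.degree_single]
      have hadd : (Finsupp.single i 1 + d').degree =
          (Finsupp.single i 1).degree + d'.degree := by
        simp only [Finsupp.degree_eq_weight_one]
        exact map_add _ _ _
      rw [hdd, hdeg, h1] at hadd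
      omega
    have hmono : MvPolynomial.monomial d (MvPolynomial.coeff d p) =
        MvPolynomial.X i * MvPolynomial.monomial d' (MvPolynomial.coeff d p) := by
      rw [MvPolynomial.X, MvPolynomial.monomial_mul, one_mul, hdd]
    obtain ⟨x, hx, hux⟩ := hsurj (Ideal.Quotient.mk I (MvPolynomial.monomial d'
        (MvPolynomial.coeff d p)))
      ((mem_quotComponent_iff I).mpr ⟨_, MvPolynomial.isHomogeneous_monomial _ hdeg', rfl⟩)
    refine ⟨Ideal.Quotient.mk I (MvPolynomial.X i) * x, ?_, ?_⟩
    · have hXi : Ideal.Quotient.mk I (MvPolynomial.X i) ∈ quotComponent I 1 :=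
        (mem_quotComponent_iff I).mpr ⟨_, MvPolynomial.isHomogeneous_X _ _, rfl⟩
      simpa [Nat.add_comm] using mem_quotComponent_mul I hXi hx
    · simp only [LinearMap.mulLeft_apply]
      rw [hmono, map_mul]
      rw [← hux]
      ring
  intro y hy
  obtain ⟨x, hx, hux⟩ := key y hy
  exact ⟨x, hx, hux⟩

end Aux

theorem gorenstein_wlp_single_degree {k : Type*} [Field k] [CharZero k] {n : ℕ}
    (I : Ideal (MvPolynomial (Fin n) k))
    (hIhom : ∀ f ∈ I, ∀ j : ℕ, MvPolynomial.homogeneousComponent j f ∈ I)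
    (hart : FiniteDimensional k (MvPolynomial (Fin n) k ⧸ I))
    (e : ℕ)
    (hsoc : Module.finrank k (quotComponent I e) = 1)
    (htop : ∀ j : ℕ, e < j → quotComponent I j = ⊥)
    (hpair : ∀ i ≤ e, ∀ x ∈ quotComponent I i, x ≠ 0 →
      ∃ y ∈ quotComponent I (e - i), x * y ≠ 0)
    (ℓ : MvPolynomial (Fin n) k) (hℓ : ℓ ∈ MvPolynomial.homogeneousSubmodule (Fin n) k 1) :
    IsWeakLefschetzElem I ℓ ↔ mulMaxRank I (Ideal.Quotient.mk I ℓ) ((e - 1) / 2) := by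
  constructor
  · intro h
    exact h _
  · intro h j
    set u := Ideal.Quotient.mk I ℓ with hu_def
    have hu : u ∈ quotComponent I 1 := (mem_quotComponent_iff I).mpr ⟨ℓ, hℓ, rfl⟩
    -- trivial surjectivity above the socle degree
    have htriv : ∀ j : ℕ, e ≤ j → ∀ y ∈ quotComponent I (j + 1),
        ∃ x ∈ quotComponent I j, u * x = y := by
      intro j hj y hy
      rw [htop (j + 1) (by omega), Submodule.mem_bot] at hy
      exact ⟨0, Submodule.zero_mem _, by rw [hy, mul_zero]⟩
    -- propagation of surjectivity
    have hprop : ∀ t : ℕ, (∀ y ∈ quotComponent I (t + 1), ∃ x ∈ quotComponent I t, u * x = y) →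
        ∀ j, t ≤ j → ∀ y ∈ quotComponent I (j + 1), ∃ x ∈ quotComponent I j, u * x = y := by
      intro t ht j hj
      induction j, hj using Nat.le_induction with
      | base => exact ht
      | succ j hj ih => exact surj_succ hu ih
    rcases Nat.eq_zero_or_pos e with he | he
    · -- e = 0 : everything is trivially surjective
      right
      intro y hy
      rw [htop (j + 1) (by omega), Submodule.mem_bot] at hy
      exact ⟨0, Submodule.zero_mem _, by rw [hy, mul_zero]⟩
    · set i0 := (e - 1) / 2 with hi0
      set i1 := e - 1 - i0 with hi1
      have harith : i0 + i1 + 1 = e ∧ i0 ≤ i1 ∧ i1 ≤ i0 + 1 := by omega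
      rcases h with hinj | hsurj
      · -- injective at i0 : surjective at i1 and above, injective below i1
        have hs1 : ∀ y ∈ quotComponent I (i1 + 1), ∃ x ∈ quotComponent I i1, u * x = y :=
          surj_of_inj hsoc hpair hu (by omega) hinj
        by_cases hj : i1 ≤ j
        · exact Or.inr (hprop i1 hs1 j hj)
        · refine Or.inl (inj_of_surj hpair (a := j) (b := e - 1 - j) (by omega) ?_)
          exact hprop i1 hs1 (e - 1 - j) (by omega)
      · -- surjective at i0 : surjective at i0 and above, injective below i0
        by_cases hj : i0 ≤ j
        · exact Or.inr (hprop i0 hsurj j hj)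
        · refine Or.inl (inj_of_surj hpair (a := j) (b := e - 1 - j) (by omega) ?_)
          exact hprop i0 hsurj (e - 1 - j) (by omega)
end
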